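/- Let f, k : ℝ^d → ℝ ∪ {∞} be Legendre convex functions and L* ≥ 0. Then k is L*-smooth relative to f* on int(dom f*) if and only if ∇f(int(dom f)) ⊆ int(dom k) and for all x, y ∈ int(dom f), D_k(∇f(y), ∇f(x)) ≤ L*·D_f(x, y). -/

import Mathlib

open Filter Topology RealInnerProductSpace Classical

noncomputable section

abbrev E (d : ℕ) := EuclideanSpace ℝ (Fin d)

def IsEssentiallySmooth {d : ℕ} (f : E d → ℝ) (S : Set (E d)) (f' : E d → E d) : Prop :=
  (interior S).Nonempty ∧
  (∀ x ∈ interior S, HasGradientAt f (f' x) x) ∧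
  ∀ (u : ℕ → E d) (y : E d), (∀ n, u n ∈ interior S) → y ∈ frontier S →
    Tendsto u atTop (𝓝 y) → Tendsto (fun n => ‖f' (u n)‖) atTop atTop

def IsProperClosedConvexOn {d : ℕ} (f : E d → ℝ) (S : Set (E d)) : Prop :=
  S.Nonempty ∧ ConvexOn ℝ S f ∧
  IsClosed {p : E d × ℝ | p.1 ∈ S ∧ f p.1 ≤ p.2}

def IsLegendre {d : ℕ} (f : E d → ℝ) (S : Set (E d)) (f' : E d → E d) : Prop :=
  IsProperClosedConvexOn f S ∧ IsEssentiallySmooth f S f' ∧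
  StrictConvexOn ℝ (interior S) f

/-- The convex conjugate `f*` of the function equal to `f` on `S` and `∞` outside. -/
def conj {d : ℕ} (f : E d → ℝ) (S : Set (E d)) : E d → EReal :=
  fun y => ⨆ x ∈ S, ((⟪x, y⟫ - f x : ℝ) : EReal)

/-- `k` (with domain `Sk`) is `L`-smooth relative to the extended-real-valued convex
function `φ` on `Q`: `Q ⊆ dom k ∩ dom φ` and `L·φ - k` is convex on `Q`. -/
def RelSmoothOn {d : ℕ} (k : E d → ℝ) (Sk : Set (E d)) (φ : E d → EReal)
    (Q : Set (E d)) (L : ℝ) : Prop :=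
  Q ⊆ Sk ∧ (∀ y ∈ Q, φ y ≠ ⊤ ∧ φ y ≠ ⊥) ∧
  ConvexOn ℝ Q (fun y => L * (φ y).toReal - k y)

section Aux

variable {d : ℕ}

/-- derivative of `f` along a line, from the gradient. -/
lemma hasDerivAt_line {f : E d → ℝ} {g : E d} (x v : E d) (h : HasGradientAt f g x) :
    HasDerivAt (fun t : ℝ => f (x + t • v)) ⟪g, v⟫ 0 := by
  have hγ : HasDerivAt (fun t : ℝ => x + t • v) v 0 := by
    simpa using ((hasDerivAt_id (0:ℝ)).smul_const v).const_add x
  have hf : HasFDerivAt f (InnerProductSpace.toDual ℝ (E d) g) ((fun t : ℝ => x + t • v) 0) := by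
    simpa using hasGradientAt_iff_hasFDerivAt.mp h
  exact hf.comp_hasDerivAt (0:ℝ) hγ

/-- 1-D helper: convex + derivative at 0 gives the secant bound. -/
lemma deriv_le_sub {F : ℝ → ℝ} {s : Set ℝ} (hF : ConvexOn ℝ s F) (hs : Set.Icc (0:ℝ) 1 ⊆ s)
    {c : ℝ} (hd : HasDerivAt F c 0) : c ≤ F 1 - F 0 := by
  have h := hasDerivAt_iff_tendsto_slope.mp hd
  have h' : Filter.Tendsto (slope F 0) (𝓝[>] (0:ℝ)) (𝓝 c) :=
    h.mono_left (nhdsWithin_mono _ (fun t ht => ne_of_gt ht))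
  refine le_of_tendsto h' ?_
  filter_upwards [Ioc_mem_nhdsGT_of_mem (by norm_num : (0:ℝ) ∈ Set.Ico (0:ℝ) 1)] with t ht
  have h01 : (0:ℝ) ∈ s := hs (by norm_num)
  have h11 : (1:ℝ) ∈ s := hs (by norm_num)
  have ht' : t ∈ s := hs ⟨ht.1.le, ht.2⟩
  have := hF.secant_mono h01 ht' h11 (ne_of_gt ht.1) one_ne_zero ht.2
  simpa [slope_def_field, div_eq_mul_inv] using this.trans_eq (by ring_nf)

end Aux
section Aux2

variable {d : ℕ}

lemma convexOn_line {f : E d → ℝ} {S : Set (E d)} (hconv : ConvexOn ℝ S f) (x v : E d) :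
    ConvexOn ℝ {t : ℝ | x + t • v ∈ S} (fun t => f (x + t • v)) := by
  constructor
  · intro t1 ht1 t2 ht2 a b ha hb hab
    have he : x + (a * t1 + b * t2) • v = a • (x + t1 • v) + b • (x + t2 • v) := by
      rw [show a • (x + t1 • v) + b • (x + t2 • v)
        = (a + b) • x + (a * t1 + b * t2) • v by module, hab]; module
    show x + (a • t1 + b • t2) • v ∈ S
    simpa [smul_eq_mul, he] using hconv.1 ht1 ht2 ha hb hab
  · intro t1 ht1 t2 ht2 a b ha hb hab
    have he : x + (a * t1 + b * t2) • v = a • (x + t1 • v) + b • (x + t2 • v) := by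
      rw [show a • (x + t1 • v) + b • (x + t2 • v)
        = (a + b) • x + (a * t1 + b * t2) • v by module, hab]; module
    simpa [smul_eq_mul, he] using hconv.2 ht1 ht2 ha hb hab

/-- Gradient inequality for convex functions. -/
lemma grad_ineq {f : E d → ℝ} {S : Set (E d)} (hconv : ConvexOn ℝ S f) {x z g : E d}
    (hx : x ∈ S) (hz : z ∈ S) (hg : HasGradientAt f g x) :
    ⟪g, z - x⟫ ≤ f z - f x := by
  have hd : HasDerivAt (fun t : ℝ => f (x + t • (z - x))) ⟪g, z - x⟫ 0 :=
    hasDerivAt_line x (z - x) hg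
  have hFc := convexOn_line hconv x (z - x)
  have hsub : Set.Icc (0:ℝ) 1 ⊆ {t : ℝ | x + t • (z - x) ∈ S} := by
    intro t ht
    have : x + t • (z - x) = (1 - t) • x + t • z := by module
    show x + t • (z - x) ∈ S
    rw [this]
    exact hconv.1 hx hz (by linarith [ht.2]) ht.1 (by ring)
  have := deriv_le_sub hFc hsub hd
  simpa using this

end Aux2
section Aux3

variable {d : ℕ}

/-- Strict gradient inequality on the interior. -/
lemma grad_ineq_strict {f : E d → ℝ} {S : Set (E d)} (hconv : ConvexOn ℝ S f)
    (hstrict : StrictConvexOn ℝ (interior S) f) {x z g : E d}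
    (hx : x ∈ interior S) (hz : z ∈ interior S) (hzx : z ≠ x) (hg : HasGradientAt f g x) :
    ⟪g, z - x⟫ < f z - f x := by
  set m : E d := (1/2 : ℝ) • x + (1/2 : ℝ) • z with hm
  have hmem : m ∈ interior S :=
    hstrict.1 hx hz (by norm_num) (by norm_num) (by norm_num)
  have h1 : ⟪g, m - x⟫ ≤ f m - f x :=
    grad_ineq hconv (interior_subset hx) (interior_subset hmem) hg
  have h2 : f m < (1/2 : ℝ) * f x + (1/2 : ℝ) * f z :=
    hstrict.2 hx hz (Ne.symm hzx) (by norm_num) (by norm_num) (by norm_num)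
  have h3 : ⟪g, m - x⟫ = (1/2 : ℝ) * ⟪g, z - x⟫ := by
    have : m - x = (1/2 : ℝ) • (z - x) := by rw [hm]; module
    rw [this, real_inner_smul_right]
  nlinarith [h1, h2, h3]

/-- Fenchel: each point gives a lower bound on conj. -/
lemma le_conj {f : E d → ℝ} {S : Set (E d)} {z : E d} (hz : z ∈ S) (y : E d) :
    ((⟪z, y⟫ - f z : ℝ) : EReal) ≤ conj f S y := by
  exact le_iSup₂_of_le z hz le_rfl

lemma conj_le {f : E d → ℝ} {S : Set (E d)} {y : E d} {C : ℝ}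
    (h : ∀ z ∈ S, ⟪z, y⟫ - f z ≤ C) : conj f S y ≤ (C : EReal) := by
  refine iSup₂_le fun z hz => ?_
  exact_mod_cast h z hz

lemma conj_ne_bot {f : E d → ℝ} {S : Set (E d)} (hS : S.Nonempty) (y : E d) :
    conj f S y ≠ ⊥ := by
  obtain ⟨z, hz⟩ := hS
  intro h
  have := le_conj (f := f) hz y
  rw [h, le_bot_iff] at this
  exact EReal.coe_ne_bot _ this

lemma conj_toReal_ge {f : E d → ℝ} {S : Set (E d)} {z : E d} (hS : S.Nonempty) (hz : z ∈ S)
    {y : E d} (hy : conj f S y ≠ ⊤) : ⟪z, y⟫ - f z ≤ (conj f S y).toReal := by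
  have h1 := le_conj (f := f) hz y
  have h2 : ((conj f S y).toReal : EReal) = conj f S y := EReal.coe_toReal hy (conj_ne_bot hS y)
  rw [← h2] at h1
  exact_mod_cast h1

/-- value of the conjugate at a gradient point. -/
lemma conj_grad {f : E d → ℝ} {S : Set (E d)} {f' : E d → E d} (hconv : ConvexOn ℝ S f)
    {x : E d} (hx : x ∈ interior S) (hg : HasGradientAt f (f' x) x) :
    conj f S (f' x) = ((⟪x, f' x⟫ - f x : ℝ) : EReal) := by
  refine le_antisymm (conj_le fun z hz => ?_) (le_conj (interior_subset hx) _)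
  have := grad_ineq hconv (interior_subset hx) hz hg
  have h2 : ⟪f' x, z - x⟫ = ⟪z, f' x⟫ - ⟪x, f' x⟫ := by
    rw [inner_sub_right, real_inner_comm (f' x) z, real_inner_comm (f' x) x]
  linarith [this, h2.symm.le]

/-- the domain of the conjugate is convex. -/
lemma Tconvex {f : E d → ℝ} {S : Set (E d)} (hS : S.Nonempty) :
    Convex ℝ {y | conj f S y ≠ ⊤} := by
  intro y1 hy1 y2 hy2 a b ha hb hab
  have h1 : conj f S (a • y1 + b • y2) ≤
      ((a * (conj f S y1).toReal + b * (conj f S y2).toReal : ℝ) : EReal) := by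
    refine conj_le fun z hz => ?_
    have e1 : ⟪z, a • y1 + b • y2⟫ = a * ⟪z, y1⟫ + b * ⟪z, y2⟫ := by
      rw [inner_add_right, real_inner_smul_right, real_inner_smul_right]
    have b1 : a * (⟪z, y1⟫ - f z) ≤ a * (conj f S y1).toReal :=
      mul_le_mul_of_nonneg_left (conj_toReal_ge hS hz hy1) ha
    have b2 : b * (⟪z, y2⟫ - f z) ≤ b * (conj f S y2).toReal :=
      mul_le_mul_of_nonneg_left (conj_toReal_ge hS hz hy2) hb
    have : ⟪z, a • y1 + b • y2⟫ - f z = a * (⟪z, y1⟫ - f z) + b * (⟪z, y2⟫ - f z) := by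
      rw [e1]; linear_combination (f z) * hab
    linarith
  show conj f S (a • y1 + b • y2) ≠ ⊤
  intro htop
  rw [htop] at h1
  exact (lt_irrefl (⊤:EReal)) (lt_of_le_of_lt h1 (EReal.coe_lt_top _))
section Aux4

variable {d : ℕ}

lemma subsingleton_E0 (h : d = 0) : Subsingleton (E d) := by
  subst h
  exact ⟨fun a b => PiLp.ext fun i => i.elim0⟩

lemma nontrivial_E (h : 0 < d) : Nontrivial (E d) := by
  refine ⟨⟨0, EuclideanSpace.single ⟨0, h⟩ 1, fun he => ?_⟩⟩
  have := congrArg (fun v : E d => v ⟨0, h⟩) he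
  simp [EuclideanSpace.single_apply] at this

/-- The gradient of an interior point lies in the interior of the domain of the conjugate. -/
lemma grad_mem_interior_T {f : E d → ℝ} {Sf : Set (E d)} {f' : E d → E d}
    (hf : IsLegendre f Sf f') {x0 : E d} (hx0 : x0 ∈ interior Sf) :
    f' x0 ∈ interior {y | conj f Sf y ≠ ⊤} := by
  obtain ⟨⟨hSne, hconv, hclosed⟩, ⟨hint, hgrad, hblow⟩, hstrict⟩ := hf
  rcases Nat.eq_zero_or_pos d with hd | hd
  · -- trivial case `d = 0`
    haveI := subsingleton_E0 hd
    have hT : {y | conj f Sf y ≠ ⊤} = Set.univ := by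
      refine Set.eq_univ_of_forall fun y => ?_
      have : conj f Sf y ≤ ((⟪x0, y⟫ - f x0 : ℝ) : EReal) :=
        conj_le fun z hz => by rw [Subsingleton.elim z x0]
      intro htop
      rw [htop] at this
      exact (lt_irrefl (⊤:EReal)) (lt_of_le_of_lt this (EReal.coe_lt_top _))
    rw [hT, interior_univ]; trivial
  haveI := nontrivial_E hd
  -- a closed ball inside the interior
  obtain ⟨ε, hε, hball⟩ := Metric.isOpen_iff.mp isOpen_interior x0 hx0
  set r : ℝ := ε / 2 with hr
  have hrpos : 0 < r := by positivity
  have hcb : Metric.closedBall x0 r ⊆ interior Sf :=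
    (Metric.closedBall_subset_ball (by simp [hr]; linarith)).trans hball
  -- the minimum of the Bregman distance over the sphere
  set G : E d → ℝ := fun z => f z - f x0 - ⟪f' x0, z - x0⟫ with hG
  have hGcont : ContinuousOn G (Metric.sphere x0 r) := by
    have h1 : ContinuousOn f (interior Sf) := hconv.continuousOn_interior
    have hsub : Metric.sphere x0 r ⊆ interior Sf :=
      Metric.sphere_subset_closedBall.trans hcb
    exact ((h1.mono hsub).sub continuousOn_const).sub
      ((continuous_const.inner (continuous_id.sub continuous_const)).continuousOn)
  have hsne : (Metric.sphere x0 r).Nonempty := NormedSpace.sphere_nonempty.mpr hrpos.le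
  obtain ⟨zm, hzm_mem, hzm⟩ := (isCompact_sphere x0 r).exists_isMinOn hsne hGcont
  have hzm_int : zm ∈ interior Sf := hcb (Metric.sphere_subset_closedBall hzm_mem)
  have hzm_ne : zm ≠ x0 := by
    intro h
    rw [h, Metric.mem_sphere, dist_self] at hzm_mem
    exact hrpos.ne hzm_mem
  set m : ℝ := G zm with hm
  have hmpos : 0 < m := by
    have := grad_ineq_strict hconv hstrict hx0 hzm_int hzm_ne (hgrad x0 hx0)
    simp only [hm, hG]
    linarith
  set δ : ℝ := m / (2 * r) with hδ
  have hδpos : 0 < δ := by positivity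
  -- the ball of radius δ around f' x0 lies in the domain
  have hsubT : Metric.ball (f' x0) δ ⊆ {y | conj f Sf y ≠ ⊤} := by
    intro y hy
    rw [Metric.mem_ball, dist_eq_norm] at hy
    set g : E d → ℝ := fun z => f z - ⟪z, y⟫ with hg
    -- the key lower bound
    have key : ∀ z ∈ Sf, g x0 - δ * r ≤ g z := by
      intro z hz
      have inner_bound : ∀ w : E d, ‖w - x0‖ ≤ r → -(δ * r) ≤ ⟪f' x0 - y, w - x0⟫ := by
        intro w hw
        have h1 : |⟪f' x0 - y, w - x0⟫| ≤ ‖f' x0 - y‖ * ‖w - x0‖ := abs_real_inner_le_norm _ _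
        have h2 : ‖f' x0 - y‖ * ‖w - x0‖ ≤ δ * r := by
          rw [norm_sub_rev]
          exact mul_le_mul hy.le hw (norm_nonneg _) hδpos.le
        have := neg_abs_le ⟪f' x0 - y, w - x0⟫
        linarith
      have gdiff : ∀ w : E d, w ∈ Sf → ‖w - x0‖ ≤ r →
          G w + ⟪f' x0 - y, w - x0⟫ = g w - g x0 := by
        intro w _ _
        simp only [hG, hg, inner_sub_left, inner_sub_right]
        rw [real_inner_comm w y, real_inner_comm x0 y]
        ring
      rcases le_or_gt ‖z - x0‖ r with hle | hlt
      · have hGz : 0 ≤ G z := by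
          have := grad_ineq hconv (interior_subset hx0) hz (hgrad x0 hx0)
          simp only [hG]; linarith
        have := gdiff z hz hle
        have := inner_bound z hle
        linarith
      · set lam : ℝ := r / ‖z - x0‖ with hlam
        have hnz : 0 < ‖z - x0‖ := lt_trans hrpos hlt
        have hlam0 : 0 < lam := by positivity
        have hlam1 : lam < 1 := by
          rw [hlam, div_lt_one hnz]; exact hlt
        set zr : E d := x0 + lam • (z - x0) with hzr
        have hzr_norm : ‖zr - x0‖ = r := by
          simp only [hzr, add_sub_cancel_left, norm_smul, Real.norm_eq_abs,
            abs_of_pos hlam0, hlam]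
          field_simp
          rw [abs_of_pos (div_pos hrpos hnz)]
          field_simp
        have hzr_sphere : zr ∈ Metric.sphere x0 r := by
          rw [Metric.mem_sphere, dist_eq_norm]; exact hzr_norm
        have hzr_comb : zr = (1 - lam) • x0 + lam • z := by rw [hzr]; module
        have hzr_Sf : zr ∈ Sf := by
          rw [hzr_comb]
          exact hconv.1 (interior_subset hx0) hz (by linarith) hlam0.le (by ring)
        have hfzr : f zr ≤ (1 - lam) * f x0 + lam * f z := by
          have := hconv.2 (interior_subset hx0) hz
            (by linarith : (0:ℝ) ≤ 1 - lam) hlam0.le (by ring : (1 - lam) + lam = 1)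
          simpa [hzr_comb, smul_eq_mul] using this
        have hgzr : g zr ≤ (1 - lam) * g x0 + lam * g z := by
          have e : ⟪zr, y⟫ = (1 - lam) * ⟪x0, y⟫ + lam * ⟪z, y⟫ := by
            rw [hzr_comb, inner_add_left, real_inner_smul_left, real_inner_smul_left]
          simp only [hg]
          rw [e]; linarith
        have hGzr : m ≤ G zr := hzm hzr_sphere
        have hlow : m - δ * r ≤ g zr - g x0 := by
          have := gdiff zr hzr_Sf hzr_norm.le
          have := inner_bound zr hzr_norm.le
          linarith
        have hmhalf : m - δ * r = m / 2 := by
          rw [hδ]; field_simp; ring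
        -- g zr - g x0 ≤ lam * (g z - g x0)
        have hkey2 : m / 2 ≤ lam * (g z - g x0) := by
          rw [← hmhalf]
          have : g zr - g x0 ≤ lam * (g z - g x0) := by nlinarith [hgzr]
          linarith
        have hgz : 0 ≤ g z - g x0 := by
          by_contra hcon
          push_neg at hcon
          have h2 := mul_neg_of_pos_of_neg hlam0 (by linarith : g z - g x0 < 0)
          have h3 : m / 2 < 0 := lt_of_le_of_lt hkey2 h2
          simp only [hm] at h3
          linarith
        nlinarith [mul_pos hδpos hrpos]
    have : conj f Sf y ≤ ((⟪x0, y⟫ - f x0 + δ * r : ℝ) : EReal) := by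
      refine conj_le fun z hz => ?_
      have := key z hz
      simp only [hg] at this
      linarith
    show conj f Sf y ≠ ⊤
    intro htop
    rw [htop] at this
    exact (lt_irrefl (⊤:EReal)) (lt_of_le_of_lt this (EReal.coe_lt_top _))
  exact interior_maximal hsubT Metric.isOpen_ball (Metric.mem_ball_self hδpos)

end Aux4
section Aux5

variable {d : ℕ}

set_option maxHeartbeats 2000000 in
/-- Attainment: every interior point of the conjugate domain is a gradient. -/
lemma exists_grad_eq {f : E d → ℝ} {Sf : Set (E d)} {f' : E d → E d}
    (hf : IsLegendre f Sf f') {y : E d}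
    (hy : y ∈ interior {y | conj f Sf y ≠ ⊤}) :
    ∃ x ∈ interior Sf, f' x = y := by
  obtain ⟨⟨hSne, hconv, hclosed⟩, ⟨hint, hgrad, hblow⟩, hstrict⟩ := hf
  rcases Nat.eq_zero_or_pos d with hd | hd
  · haveI := subsingleton_E0 hd
    obtain ⟨x0, hx0⟩ := hint
    exact ⟨x0, hx0, Subsingleton.elim _ _⟩
  have hyT : conj f Sf y ≠ ⊤ := interior_subset hy
  -- radius of a ball around y inside the domain
  obtain ⟨ε, hε, hball⟩ := Metric.isOpen_iff.mp isOpen_interior y hy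
  have hballT : Metric.ball y ε ⊆ {y | conj f Sf y ≠ ⊤} := hball.trans interior_subset
  -- a uniform bound on the conjugate at the vertices
  set observe : Fin d → ℝ := fun i =>
    max (conj f Sf (y + (ε/2) • EuclideanSpace.single i (1:ℝ))).toReal
        (conj f Sf (y - (ε/2) • EuclideanSpace.single i (1:ℝ))).toReal with hobs
  haveI : Nonempty (Fin d) := ⟨⟨0, hd⟩⟩
  obtain ⟨M, hM⟩ : ∃ M : ℝ,
      M = max (conj f Sf y).toReal (Finset.univ.sup' Finset.univ_nonempty observe) := ⟨_, rfl⟩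
  have hvertmem : ∀ (i : Fin d) (σ : ℝ), σ = 1 ∨ σ = -1 →
      y + σ • ((ε/2) • EuclideanSpace.single i (1:ℝ)) ∈ {y | conj f Sf y ≠ ⊤} := by
    intro i σ hσ
    apply hballT
    rw [Metric.mem_ball, dist_eq_norm]
    have h1 : ‖σ • ((ε/2) • EuclideanSpace.single i (1:ℝ))‖ = ε / 2 := by
      rw [norm_smul, norm_smul]
      rcases hσ with h | h <;>
        simp [h, EuclideanSpace.norm_single, abs_of_pos, hε, abs_of_nonneg (by linarith : (0:ℝ) ≤ ε/2)]
    simp only [add_sub_cancel_left]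
    rw [h1]; linarith
  -- the objective function
  obtain ⟨g, hg⟩ : ∃ g : E d → ℝ, g = fun z => f z - ⟪z, y⟫ := ⟨_, rfl⟩
  have hgz' : ∀ z : E d, g z = f z - ⟪z, y⟫ := fun z => by rw [hg]
  have hglb : ∀ z ∈ Sf, -((conj f Sf y).toReal) ≤ g z := by
    intro z hz
    have := conj_toReal_ge hSne hz hyT
    rw [hgz' z]; linarith
  have hbdd : BddBelow (g '' Sf) := by
    refine ⟨-((conj f Sf y).toReal), ?_⟩
    rintro _ ⟨z, hz, rfl⟩
    exact hglb z hz
  have hne : (g '' Sf).Nonempty := hSne.image g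
  obtain ⟨m, hm⟩ : ∃ m : ℝ, m = sInf (g '' Sf) := ⟨_, rfl⟩
  have hmle : ∀ z ∈ Sf, m ≤ g z := fun z hz => hm ▸ csInf_le hbdd ⟨z, hz, rfl⟩
  -- a minimizing sequence
  have hseq : ∀ n : ℕ, ∃ z ∈ Sf, g z < m + 1/(n+1) := by
    intro n
    obtain ⟨a, ⟨z, hz, rfl⟩, ha⟩ := Real.lt_sInf_add_pos hne
      (by positivity : (0:ℝ) < 1/(n+1))
    rw [← hm] at ha
    exact ⟨z, hz, ha⟩
  choose z hzS hgz using hseq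
  -- coordinatewise bound on the minimizing sequence
  have hcoord : ∀ (w : E d), w ∈ Sf → g w ≤ m + 1 → ∀ i : Fin d, |w i| ≤ (M + m + 1) / (ε/2) := by
    intro w hw hgw i
    have hbase : ∀ σ : ℝ, σ = 1 ∨ σ = -1 →
        σ * ((ε/2) * w i) ≤ M + m + 1 := by
      intro σ hσ
      have hmem := hvertmem i σ hσ
      have h1 := conj_toReal_ge hSne hw hmem
      have h2 : ⟪w, y + σ • ((ε/2) • EuclideanSpace.single i (1:ℝ))⟫
          = ⟪w, y⟫ + σ * ((ε/2) * w i) := by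
        rw [inner_add_right, real_inner_smul_right, real_inner_smul_right]
        congr 2
        have := EuclideanSpace.inner_single_right (𝕜 := ℝ) i (1:ℝ) w
        simp only [RCLike.conj_to_real, starRingEnd_apply, star_trivial] at this
        rw [this]; ring
      have h3 : (conj f Sf (y + σ • ((ε/2) • EuclideanSpace.single i (1:ℝ)))).toReal ≤ M := by
        rw [hM]
        rcases hσ with h | h
        · subst h
          refine le_trans ?_ (le_max_right _ _)
          refine le_trans ?_ (Finset.le_sup' observe (Finset.mem_univ i))
          simp only [hobs, one_smul]
          exact le_max_left _ _
        · subst h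
          refine le_trans ?_ (le_max_right _ _)
          refine le_trans ?_ (Finset.le_sup' observe (Finset.mem_univ i))
          simp only [hobs]
          rw [show y + (-1 : ℝ) • ((ε/2) • EuclideanSpace.single i (1:ℝ))
            = y - (ε/2) • EuclideanSpace.single i (1:ℝ) by module]
          exact le_max_right _ _
      rw [h2] at h1
      rw [hgz' w] at hgw
      linarith
    have hp := hbase 1 (Or.inl rfl)
    have hn := hbase (-1) (Or.inr rfl)
    have hε2 : (0:ℝ) < ε/2 := by linarith
    have hB : (M + m + 1) / (ε/2) * (ε/2) = M + m + 1 := div_mul_cancel₀ _ (ne_of_gt hε2)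
    rw [abs_le]
    constructor
    · nlinarith [hn]
    · nlinarith [hp]
  -- norm bound for the minimizing sequence
  obtain ⟨B, hB⟩ : ∃ B : ℝ, B = (M + m + 1) / (ε/2) := ⟨_, rfl⟩
  have hz0 : g (z 0) ≤ m + 1 := by
    have h := hgz 0
    have : (1:ℝ)/((0:ℕ)+1) = 1 := by norm_num
    rw [this] at h
    linarith
  have hBnn : 0 ≤ B := by
    have := hcoord (z 0) (hzS 0) hz0 ⟨0, hd⟩
    rw [← hB] at this
    exact le_trans (abs_nonneg _) this
  obtain ⟨R, hR⟩ : ∃ R : ℝ, R = Real.sqrt d * B := ⟨_, rfl⟩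
  have hznorm : ∀ n, z n ∈ Metric.closedBall (0 : E d) R := by
    intro n
    rw [Metric.mem_closedBall, dist_zero_right, hR]
    have hb : ∀ i : Fin d, |z n i| ≤ B := by
      rw [hB]
      refine hcoord (z n) (hzS n) ?_
      have h2 := hgz n
      have h1 : (1:ℝ)/(n+1) ≤ 1 := by
        rw [div_le_one (by positivity)]; push_cast; linarith
      linarith
    rw [EuclideanSpace.norm_eq]
    have hsum : ∑ i : Fin d, ‖z n i‖ ^ 2 ≤ (d : ℝ) * B ^ 2 := by
      calc ∑ i : Fin d, ‖z n i‖ ^ 2 ≤ ∑ _i : Fin d, B ^ 2 := by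
            refine Finset.sum_le_sum fun i _ => ?_
            rw [Real.norm_eq_abs]
            have := hb i
            nlinarith [abs_nonneg (z n i)]
        _ = (d : ℝ) * B ^ 2 := by rw [Finset.sum_const]; simp [mul_comm]
    calc Real.sqrt (∑ i : Fin d, ‖z n i‖ ^ 2) ≤ Real.sqrt ((d:ℝ) * B ^ 2) :=
          Real.sqrt_le_sqrt hsum
      _ = Real.sqrt d * B := by
          rw [Real.sqrt_mul (Nat.cast_nonneg d), Real.sqrt_sq hBnn]
  -- extract a convergent subsequence
  obtain ⟨xb, hxbmem, φ, hφ, hφconv⟩ :=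
    (isCompact_closedBall (0 : E d) R).tendsto_subseq hznorm
  -- the limit of the values
  have hgtend : Tendsto (fun n => g (z n)) atTop (𝓝 m) := by
    rw [Metric.tendsto_atTop]
    intro δ hδ
    obtain ⟨N, hN⟩ := exists_nat_gt (1/δ)
    refine ⟨N, fun n hn => ?_⟩
    rw [Real.dist_eq, abs_lt]
    have h1 := hmle (z n) (hzS n)
    have h2 := hgz n
    have h3 : (1:ℝ)/(n+1) < δ := by
      rw [div_lt_iff₀ (by positivity)]
      rw [div_lt_iff₀ hδ] at hN
      have : (N:ℝ) ≤ n := by exact_mod_cast hn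
      nlinarith
    constructor <;> linarith
  have hgsub : Tendsto (fun n => g (z (φ n))) atTop (𝓝 m) :=
    hgtend.comp hφ.tendsto_atTop
  have hinner : Tendsto (fun n => ⟪z (φ n), y⟫) atTop (𝓝 ⟪xb, y⟫) :=
    ((continuous_id.inner continuous_const).tendsto xb).comp hφconv
  have hftend : Tendsto (fun n => f (z (φ n))) atTop (𝓝 (m + ⟪xb, y⟫)) := by
    have : (fun n => f (z (φ n))) = fun n => g (z (φ n)) + ⟪z (φ n), y⟫ := by
      funext n; rw [hgz']; ring
    rw [this]
    exact hgsub.add hinner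
  -- closed epigraph gives that the limit is a minimizer in Sf
  have hmem : (xb, m + ⟪xb, y⟫) ∈ {p : E d × ℝ | p.1 ∈ Sf ∧ f p.1 ≤ p.2} := by
    refine hclosed.mem_of_tendsto (hφconv.prodMk_nhds hftend)
      (Filter.Eventually.of_forall fun n => ⟨hzS (φ n), le_refl _⟩)
  obtain ⟨hxbSf, hxble⟩ := hmem
  have hxbmin : ∀ w ∈ Sf, g xb ≤ g w := by
    intro w hw
    have : g xb ≤ m := by rw [hgz' xb]; simp only at hxble; linarith
    exact this.trans (hmle w hw)
  -- the minimizer is interior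
  have hxbint : xb ∈ interior Sf := by
    by_contra hnot
    have hfront : xb ∈ frontier Sf := ⟨subset_closure hxbSf, hnot⟩
    obtain ⟨x0, hx0⟩ := hint
    -- sequence approaching xb from the interior
    obtain ⟨t, ht⟩ : ∃ t : ℕ → ℝ, t = fun n : ℕ => 1/((n:ℝ)+1) := ⟨_, rfl⟩
    have ht' : ∀ n : ℕ, t n = 1/((n:ℝ)+1) := fun n => by rw [ht]
    obtain ⟨u, hu⟩ : ∃ u : ℕ → E d, u = fun n => xb + t n • (x0 - xb) := ⟨_, rfl⟩
    have hu' : ∀ n, u n = xb + t n • (x0 - xb) := fun n => by rw [hu]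
    have htpos : ∀ n, 0 < t n := fun n => by rw [ht']; positivity
    have htle : ∀ n, t n ≤ 1 := by
      intro n
      rw [ht', div_le_one (by positivity)]
      linarith
    have huint : ∀ n, u n ∈ interior Sf := by
      intro n
      have : u n = (t n) • x0 + (1 - t n) • xb := by rw [hu']; module
      rw [this]
      exact (hconv.1).combo_interior_closure_mem_interior hx0 (subset_closure hxbSf)
        (htpos n) (by linarith [htle n]) (by ring)
    have hutend : Tendsto u atTop (𝓝 xb) := by
      have h0 : Tendsto t atTop (𝓝 0) := by
        rw [ht]; exact tendsto_one_div_add_atTop_nhds_zero_nat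
      have h1 : Tendsto (fun n => xb + t n • (x0 - xb)) atTop (𝓝 (xb + (0:ℝ) • (x0 - xb))) :=
        tendsto_const_nhds.add (h0.smul_const _)
      rw [hu]
      simpa using h1
    have hgrow := hblow u xb huint hfront hutend
    -- but the gradients stay bounded
    obtain ⟨r, hr, hrball⟩ := Metric.isOpen_iff.mp isOpen_interior x0 hx0
    have hcb : Metric.closedBall x0 (r/2) ⊆ interior Sf :=
      (Metric.closedBall_subset_ball (by linarith)).trans hrball
    -- maximum of g on the closed ball
    have hgcont : ContinuousOn g (Metric.closedBall x0 (r/2)) := by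
      have h1 : ContinuousOn f (interior Sf) := hconv.continuousOn_interior
      rw [hg]
      exact (h1.mono hcb).sub ((continuous_id.inner continuous_const).continuousOn)
    obtain ⟨wmax, hwmax_mem, hwmax⟩ := (isCompact_closedBall x0 (r/2)).exists_isMaxOn
      ⟨x0, Metric.mem_closedBall_self (by linarith)⟩ hgcont
    obtain ⟨Mb, hMb⟩ : ∃ Mb : ℝ, Mb = g wmax := ⟨_, rfl⟩
    have hbound : ∀ n, ‖f' (u n)‖ ≤ (Mb - m) / (r/2) + ‖y‖ := by
      intro n
      have hun := huint n
      have hgradu := hgrad (u n) hun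
      -- gradient inequality for g at u n
      have hgi : ∀ w ∈ Sf, ⟪f' (u n) - y, w - u n⟫ ≤ g w - g (u n) := by
        intro w hw
        have := grad_ineq hconv (interior_subset hun) hw hgradu
        have he : ⟪f' (u n) - y, w - u n⟫
            = ⟪f' (u n), w - u n⟫ - (⟪w, y⟫ - ⟪u n, y⟫) := by
          simp only [inner_sub_left, inner_sub_right]
          rw [real_inner_comm w y, real_inner_comm (u n) y]
          ring
        rw [hgz' w, hgz' (u n), he]
        linarith
      -- direction of steepest growth
      have hpos0 : ⟪f' (u n) - y, x0 - xb⟫ ≥ 0 := by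
        have h1 := hgi xb hxbSf
        have h2 : g xb - g (u n) ≤ 0 := by
          have := hxbmin (u n) (interior_subset hun)
          linarith
        have h3 : xb - u n = (-(t n)) • (x0 - xb) := by rw [hu']; module
        rw [h3, real_inner_smul_right] at h1
        nlinarith [htpos n]
      have hpos : 0 ≤ ⟪f' (u n) - y, x0 - u n⟫ := by
        have h3 : x0 - u n = (1 - t n) • (x0 - xb) := by rw [hu']; module
        rw [h3, real_inner_smul_right]
        have := htle n
        nlinarith
      rcases eq_or_ne (f' (u n) - y) 0 with h0 | h0
      · have : f' (u n) = y := by rwa [sub_eq_zero] at h0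
        rw [this]
        have hMbm : m ≤ Mb := hMb ▸ hmle wmax (interior_subset (hcb hwmax_mem))
        have : 0 ≤ (Mb - m) / (r/2) := div_nonneg (by linarith) (by linarith)
        linarith
      · set v : E d := (‖f' (u n) - y‖)⁻¹ • (f' (u n) - y) with hv
        have hvnorm : ‖v‖ = 1 := by
          rw [hv, norm_smul, norm_inv, norm_norm,
            inv_mul_cancel₀ (norm_ne_zero_iff.mpr h0)]
        set w : E d := x0 + (r/2) • v with hw
        have hwmem : w ∈ Metric.closedBall x0 (r/2) := by
          rw [Metric.mem_closedBall, dist_eq_norm, hw]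
          simp only [add_sub_cancel_left]
          rw [norm_smul, hvnorm, Real.norm_eq_abs, abs_of_pos (by linarith : (0:ℝ) < r/2)]
          simp
        have hwSf : w ∈ Sf := interior_subset (hcb hwmem)
        have h4 := hgi w hwSf
        have hpv : ⟪f' (u n) - y, v⟫ = ‖f' (u n) - y‖ := by
          rw [hv, real_inner_smul_right, real_inner_self_eq_norm_sq]
          rw [pow_two]
          field_simp
        have h5 : ⟪f' (u n) - y, w - u n⟫
            = ⟪f' (u n) - y, x0 - u n⟫ + (r/2) * ‖f' (u n) - y‖ := by
          have hwe : w - u n = (x0 - u n) + (r/2) • v := by rw [hw]; module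
          rw [hwe, inner_add_right, real_inner_smul_right, hpv]
        have h6 : g w ≤ Mb := hMb ▸ hwmax hwmem
        have h7 : m ≤ g (u n) := hmle (u n) (interior_subset hun)
        have h8 : (r/2) * ‖f' (u n) - y‖ ≤ Mb - m := by
          rw [h5] at h4
          linarith
        have h9 : ‖f' (u n) - y‖ ≤ (Mb - m) / (r/2) := by
          rw [le_div_iff₀ (by linarith : (0:ℝ) < r/2)]
          linarith [h8]
        calc ‖f' (u n)‖ ≤ ‖f' (u n) - y‖ + ‖y‖ := by
              have := norm_sub_norm_le (f' (u n)) y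
              have := norm_add_le (f' (u n) - y) y
              simpa using this
          _ ≤ (Mb - m) / (r/2) + ‖y‖ := by linarith
    obtain ⟨n, hn⟩ := (hgrow.eventually_gt_atTop ((Mb - m) / (r/2) + ‖y‖)).exists
    exact absurd (hbound n) (not_le.mpr hn)
  -- first-order condition at the interior minimizer
  refine ⟨xb, hxbint, ?_⟩
  have hlocmin : IsLocalMin g xb := by
    filter_upwards [isOpen_interior.mem_nhds hxbint] with w hw
    exact hxbmin w (interior_subset hw)
  have hkey : ∀ w : E d, ⟪f' xb, w⟫ - ⟪w, y⟫ = 0 := by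
    intro w
    obtain ⟨F, hF⟩ : ∃ F : ℝ → ℝ, F = fun t => g (xb + t • w) := ⟨_, rfl⟩
    have hd1 : HasDerivAt (fun t : ℝ => f (xb + t • w)) ⟪f' xb, w⟫ 0 :=
      hasDerivAt_line xb w (hgrad xb hxbint)
    have hd2 : HasDerivAt (fun t : ℝ => ⟪xb + t • w, y⟫) ⟪w, y⟫ 0 := by
      have heq : (fun t : ℝ => ⟪xb + t • w, y⟫) = fun t : ℝ => ⟪xb, y⟫ + t * ⟪w, y⟫ := by
        funext t
        rw [inner_add_left, real_inner_smul_left]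
      rw [heq]
      simpa using (((hasDerivAt_id (0:ℝ)).mul_const ⟪w, y⟫).const_add ⟪xb, y⟫)
    have hdF : HasDerivAt F (⟪f' xb, w⟫ - ⟪w, y⟫) 0 := by
      rw [hF, hg]
      exact hd1.sub hd2
    have hFmin : IsLocalMin F 0 := by
      have hcont : Filter.Tendsto (fun t : ℝ => xb + t • w) (𝓝 0) (𝓝 xb) := by
        have : Filter.Tendsto (fun t : ℝ => xb + t • w) (𝓝 0) (𝓝 (xb + (0:ℝ) • w)) :=
          tendsto_const_nhds.add ((continuous_id.smul continuous_const).tendsto 0)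
        simpa using this
      have := hcont.eventually hlocmin
      filter_upwards [this] with s hs
      rw [hF]
      simp only [hg] at hs ⊢
      simpa using hs
    exact hFmin.hasDerivAt_eq_zero hdF
  have happ : ∀ w : E d, ⟪f' xb - y, w⟫ = 0 := by
    intro w
    have := hkey w
    rw [inner_sub_left, real_inner_comm w y] at *
    linarith [this]
  have h0 := happ (f' xb - y)
  rw [real_inner_self_eq_norm_sq] at h0
  have : ‖f' xb - y‖ = 0 := by nlinarith [norm_nonneg (f' xb - y)]
  rw [norm_eq_zero, sub_eq_zero] at this
  exact this

end Aux5

set_option maxHeartbeats 2000000 in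
/-- for Legendre convex `f, k`, `k` is `L*`-smooth relative to `f*` on
`int(dom f*)` iff `∇f(int(dom f)) ⊆ int(dom k)` and
`D_k(∇f(y), ∇f(x)) ≤ L* · D_f(x, y)` for all `x, y ∈ int(dom f)`. -/
theorem stmt7 {d : ℕ} (f k : E d → ℝ) (Sf Sk : Set (E d)) (f' k' : E d → E d)
    (hf : IsLegendre f Sf f') (hk : IsLegendre k Sk k')
    (L : ℝ) (hL : 0 ≤ L) :
    RelSmoothOn k Sk (conj f Sf) (interior {y | conj f Sf y ≠ ⊤}) L ↔
      ((∀ x ∈ interior Sf, f' x ∈ interior Sk) ∧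
       ∀ x ∈ interior Sf, ∀ y ∈ interior Sf,
         k (f' y) - k (f' x) - ⟪k' (f' x), f' y - f' x⟫ ≤
           L * (f x - f y - ⟪f' y, x - y⟫)) := by
  obtain ⟨⟨hfSne, hfconv, hfclosed⟩, ⟨hfint, hfgrad, hfblow⟩, hfstrict⟩ := hf
  obtain ⟨⟨hkSne, hkconv, hkclosed⟩, ⟨hkint, hkgrad, hkblow⟩, hkstrict⟩ := hk
  have hf' : IsLegendre f Sf f' :=
    ⟨⟨hfSne, hfconv, hfclosed⟩, ⟨hfint, hfgrad, hfblow⟩, hfstrict⟩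
  set T : Set (E d) := {y | conj f Sf y ≠ ⊤} with hT
  set ψ : E d → ℝ := fun y => (conj f Sf y).toReal with hψ
  -- value of ψ at gradient points
  have hval : ∀ x ∈ interior Sf, ψ (f' x) = ⟪x, f' x⟫ - f x := by
    intro x hx
    rw [hψ]
    simp only
    rw [conj_grad hfconv hx (hfgrad x hx)]
    exact EReal.toReal_coe _
  have hQmem : ∀ x ∈ interior Sf, f' x ∈ interior T := fun x hx =>
    grad_mem_interior_T hf' hx
  -- subgradient inequality for ψ
  have hsubgrad : ∀ x ∈ interior Sf, ∀ v ∈ T, ⟪x, v - f' x⟫ ≤ ψ v - ψ (f' x) := by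
    intro x hx v hv
    have h1 : ⟪x, v⟫ - f x ≤ ψ v := conj_toReal_ge hfSne (interior_subset hx) hv
    have h2 := hval x hx
    rw [inner_sub_right]
    linarith
  -- the Bregman identity transported by the gradient
  have hbreg : ∀ x ∈ interior Sf, ∀ y ∈ interior Sf,
      ψ (f' y) - ψ (f' x) - ⟪x, f' y - f' x⟫ = f x - f y - ⟪f' y, x - y⟫ := by
    intro x hx y hy
    have c1 : ⟪x, f' y - f' x⟫ = ⟪x, f' y⟫ - ⟪x, f' x⟫ := inner_sub_right _ _ _
    have c2 : ⟪f' y, x - y⟫ = ⟪f' y, x⟫ - ⟪f' y, y⟫ := inner_sub_right _ _ _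
    have c3 : ⟪f' y, x⟫ = ⟪x, f' y⟫ := real_inner_comm _ _
    have c4 : ⟪f' y, y⟫ = ⟪y, f' y⟫ := real_inner_comm _ _
    rw [hval x hx, hval y hy]
    linarith
  constructor
  · rintro ⟨hQSk, hfin, hconvQ⟩
    have hQSk' : interior T ⊆ interior Sk := interior_maximal hQSk isOpen_interior
    refine ⟨fun x hx => hQSk' (hQmem x hx), ?_⟩
    intro x hx y hy
    have hu : f' x ∈ interior T := hQmem x hx
    have hv : f' y ∈ interior T := hQmem y hy
    have hkgradu : HasGradientAt k (k' (f' x)) (f' x) := hkgrad (f' x) (hQSk' hu)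
    -- slope bound from convexity of h = L ψ - k on Q
    have hslope : ∀ t : ℝ, t ∈ Set.Ioc (0:ℝ) 1 →
        L * ⟪x, f' y - f' x⟫ -
          ((L * ψ (f' y) - k (f' y)) - (L * ψ (f' x) - k (f' x)))
        ≤ (k (f' x + t • (f' y - f' x)) - k (f' x)) / t := by
      intro t ht
      set wt : E d := f' x + t • (f' y - f' x) with hwt
      have hwtc : wt = (1 - t) • f' x + t • f' y := by rw [hwt]; module
      have hwtQ : wt ∈ interior T := by
        rw [hwtc]
        exact hconvQ.1 hu hv (by linarith [ht.2]) ht.1.le (by ring)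
      have hcomb := hconvQ.2 hu hv (by linarith [ht.2] : (0:ℝ) ≤ 1 - t) ht.1.le
        (by ring : (1 - t) + t = 1)
      rw [← hwtc] at hcomb
      simp only [smul_eq_mul] at hcomb
      have hsub := hsubgrad x hx wt (interior_subset hwtQ)
      have hinner : ⟪x, wt - f' x⟫ = t * ⟪x, f' y - f' x⟫ := by
        rw [hwt]
        simp only [add_sub_cancel_left]
        exact real_inner_smul_right _ _ _
      rw [hinner] at hsub
      rw [le_div_iff₀ ht.1]
      nlinarith [hsub, hcomb, ht.1, hL]
    -- pass to the limit t → 0+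
    have hderiv : HasDerivAt (fun t : ℝ => k (f' x + t • (f' y - f' x)))
        ⟪k' (f' x), f' y - f' x⟫ 0 := hasDerivAt_line _ _ hkgradu
    have htendsto : Filter.Tendsto
        (fun t : ℝ => (k (f' x + t • (f' y - f' x)) - k (f' x)) / t)
        (𝓝[>] (0:ℝ)) (𝓝 ⟪k' (f' x), f' y - f' x⟫) := by
      have h1 := hasDerivAt_iff_tendsto_slope.mp hderiv
      have h2 : Filter.Tendsto (slope (fun t : ℝ => k (f' x + t • (f' y - f' x))) 0)
          (𝓝[>] (0:ℝ)) (𝓝 ⟪k' (f' x), f' y - f' x⟫) :=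
        h1.mono_left (nhdsWithin_mono _ (fun t ht => ne_of_gt ht))
      refine h2.congr fun t => ?_
      rw [slope_def_field]
      norm_num
    have hlim : L * ⟪x, f' y - f' x⟫ -
          ((L * ψ (f' y) - k (f' y)) - (L * ψ (f' x) - k (f' x)))
        ≤ ⟪k' (f' x), f' y - f' x⟫ := by
      refine ge_of_tendsto htendsto ?_
      filter_upwards [Ioc_mem_nhdsGT_of_mem (by norm_num : (0:ℝ) ∈ Set.Ico (0:ℝ) 1)]
        with t ht
      exact hslope t ht
    have hB := hbreg x hx y hy
    nlinarith [hlim, hB, hL]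
  · rintro ⟨hmem, hineq⟩
    have hQT : interior T ⊆ T := interior_subset
    refine ⟨?_, ?_, ?_⟩
    · intro w hw
      obtain ⟨xw, hxw, rfl⟩ := exists_grad_eq hf' hw
      exact interior_subset (hmem xw hxw)
    · exact fun w hw => ⟨hQT hw, conj_ne_bot hfSne w⟩
    · refine ⟨(Tconvex hfSne).interior, ?_⟩
      intro w1 hw1 w2 hw2 a b ha hb hab
      -- the three attainment points
      obtain ⟨x1, hx1, hfx1⟩ := exists_grad_eq hf' hw1
      obtain ⟨x2, hx2, hfx2⟩ := exists_grad_eq hf' hw2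
      have hwcQ : a • w1 + b • w2 ∈ interior T :=
        (Tconvex hfSne).interior hw1 hw2 ha hb hab
      obtain ⟨xc, hxc, hfxc⟩ := exists_grad_eq hf' hwcQ
      -- key inequality from the hypothesis
      have key : ∀ p ∈ interior Sf, ∀ q ∈ interior Sf,
          L * ⟪p, f' q - f' p⟫ - ⟪k' (f' p), f' q - f' p⟫ ≤
            (L * ψ (f' q) - k (f' q)) - (L * ψ (f' p) - k (f' p)) := by
        intro p hp q hq
        have h1 := hineq p hp q hq
        have h2 := hbreg p hp q hq
        nlinarith [h1, h2, hL]
      have A1 := key xc hxc x1 hx1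
      have A2 := key xc hxc x2 hx2
      rw [hfxc, hfx1] at A1
      rw [hfxc, hfx2] at A2
      -- convex combination
      have hsum1 : a * ⟪xc, w1 - (a • w1 + b • w2)⟫ + b * ⟪xc, w2 - (a • w1 + b • w2)⟫ = 0 := by
        rw [← real_inner_smul_right, ← real_inner_smul_right, ← inner_add_right]
        have : a • (w1 - (a • w1 + b • w2)) + b • (w2 - (a • w1 + b • w2))
            = (a • w1 + b • w2) - (a + b) • (a • w1 + b • w2) := by module
        rw [this, hab, one_smul, sub_self, inner_zero_right]
      have hsum2 : a * ⟪k' (a • w1 + b • w2), w1 - (a • w1 + b • w2)⟫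
          + b * ⟪k' (a • w1 + b • w2), w2 - (a • w1 + b • w2)⟫ = 0 := by
        rw [← real_inner_smul_right, ← real_inner_smul_right, ← inner_add_right]
        have : a • (w1 - (a • w1 + b • w2)) + b • (w2 - (a • w1 + b • w2))
            = (a • w1 + b • w2) - (a + b) • (a • w1 + b • w2) := by module
        rw [this, hab, one_smul, sub_self, inner_zero_right]
      show L * (conj f Sf (a • w1 + b • w2)).toReal - k (a • w1 + b • w2)
          ≤ a • (L * (conj f Sf w1).toReal - k w1) + b • (L * (conj f Sf w2).toReal - k w2)
      simp only [smul_eq_mul]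
      have C1 := mul_le_mul_of_nonneg_left A1 ha
      have C2 := mul_le_mul_of_nonneg_left A2 hb
      have hLzero : L * (a * ⟪xc, w1 - (a • w1 + b • w2)⟫
          + b * ⟪xc, w2 - (a • w1 + b • w2)⟫) = 0 := by rw [hsum1]; ring
      have habψ : a * (L * ψ (a • w1 + b • w2) - k (a • w1 + b • w2))
          + b * (L * ψ (a • w1 + b • w2) - k (a • w1 + b • w2))
          = L * ψ (a • w1 + b • w2) - k (a • w1 + b • w2) := by
        linear_combination (L * ψ (a • w1 + b • w2) - k (a • w1 + b • w2)) * hab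
      have hψdef : ∀ w : E d, ψ w = (conj f Sf w).toReal := fun w => rfl
      rw [← hψdef w1, ← hψdef w2, ← hψdef (a • w1 + b • w2)]
      nlinarith [C1, C2, hLzero, hsum2, habψ]
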